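/- arXiv:2508.01755 — 6 statements merged into one kernel-verified Lean document; each statement's English description precedes it below -/
import Mathlib

section
/- Under the same hypotheses, with M_b := max{b₀, max{w₀, R/a}}, any solution satisfies b(t) ≤ M_b and w(t) ≥ min{w₀, R/(a + δ M_b)} > 0 for all t ≥ 0 in its interval of existence; in particular solutions are uniformly bounded and bounded away from w = 0. -/
/-- Constant-barrier fencing lemma: if `f 0 ≤ K` and `f' x < 0` whenever `f x = K`,
then `f ≤ K` on `[0, T]`. -/
lemma barrier_le_const {f f' : ℝ → ℝ} {T K : ℝ}
    (hf : ∀ t ∈ Set.Icc (0:ℝ) T, HasDerivAt f (f' t) t)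
    (h0 : f 0 ≤ K)
    (hb : ∀ x ∈ Set.Ico (0:ℝ) T, f x = K → f' x < 0) :
    ∀ t ∈ Set.Icc (0:ℝ) T, f t ≤ K := by
  intro t ht
  exact image_le_of_deriv_right_lt_deriv_boundary
    (fun x hx => (hf x hx).continuousAt.continuousWithinAt)
    (fun x hx => (hf x (Set.Ico_subset_Icc_self hx)).hasDerivWithinAt)
    h0 (fun _ => hasDerivAt_const _ K)
    (fun x hx hfx => hb x hx hfx) ht

/-- With M_b := max{b₀, max{w₀, R/a}}, solutions of the planar system satisfy
b(t) ≤ M_b and w(t) ≥ min{w₀, R/(a + δ M_b)} > 0 on their interval of existence. -/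
theorem stmt_2 (R a δ ρ μ θ₁ θ₂ : ℝ)
    (hR : 0 < R) (ha : 0 < a) (hδ : 0 < δ) (hρ : 0 < ρ) (hμ : 0 < μ)
    (hθ₁ : 0 < θ₁) (hθ₂ : 0 < θ₂)
    (T : ℝ) (hT : 0 < T) (w b : ℝ → ℝ) (w₀ b₀ : ℝ)
    (hw₀ : 0 < w₀) (hb₀ : 0 < b₀) (hw0 : w 0 = w₀) (hb0 : b 0 = b₀)
    (hwpos : ∀ t ∈ Set.Icc (0:ℝ) T, 0 < w t)
    (hbpos : ∀ t ∈ Set.Icc (0:ℝ) T, 0 < b t)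
    (hodew : ∀ t ∈ Set.Icc (0:ℝ) T,
      HasDerivAt w (R - a * w t - δ * w t * b t) t)
    (hodeb : ∀ t ∈ Set.Icc (0:ℝ) T,
      HasDerivAt b (ρ * b t * (1 - b t / w t) - μ * b t / (1 + θ₁ * b t + θ₂ * w t)) t) :
    (∀ t ∈ Set.Icc (0:ℝ) T, b t ≤ max b₀ (max w₀ (R / a))) ∧
    (∀ t ∈ Set.Icc (0:ℝ) T,
      min w₀ (R / (a + δ * max b₀ (max w₀ (R / a)))) ≤ w t) ∧
    0 < min w₀ (R / (a + δ * max b₀ (max w₀ (R / a)))) := by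
  set W : ℝ := max w₀ (R / a) with hWdef
  set M : ℝ := max b₀ W with hMdef
  have hWpos : 0 < W := lt_of_lt_of_le hw₀ (le_max_left _ _)
  have hMpos : 0 < M := lt_of_lt_of_le hb₀ (le_max_left _ _)
  have hRaW : R ≤ a * W := by
    have h1 : R / a ≤ W := le_max_right _ _
    calc R = a * (R / a) := by field_simp
    _ ≤ a * W := by nlinarith
  -- Step 1: w ≤ W on [0, T]
  have hwle : ∀ t ∈ Set.Icc (0:ℝ) T, w t ≤ W := by
    apply barrier_le_const hodew (by rw [hw0]; exact le_max_left _ _)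
    intro x hx hwx
    have hbx : 0 < b x := hbpos x (Set.Ico_subset_Icc_self hx)
    rw [hwx]
    nlinarith [mul_pos (mul_pos hδ hWpos) hbx]
  -- Step 2: b ≤ M on [0, T]
  have hble : ∀ t ∈ Set.Icc (0:ℝ) T, b t ≤ M := by
    intro t ht
    by_contra hcon
    push_neg at hcon
    set ε : ℝ := (b t - M) / 2 with hεdef
    have hε : 0 < ε := by simp [hεdef]; linarith
    have : b t ≤ M + ε := by
      refine barrier_le_const hodeb (by rw [hb0]; linarith [le_max_left b₀ W]) ?_ t ht
      intro x hx hbx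
      have hxIcc := Set.Ico_subset_Icc_self hx
      have hwx : 0 < w x := hwpos x hxIcc
      have hwW : w x ≤ W := hwle x hxIcc
      have hWM : W ≤ M := le_max_right _ _
      have hbxpos : 0 < b x := hbpos x hxIcc
      have hlt : w x < b x := by rw [hbx]; linarith
      have h1 : 1 - b x / w x < 0 := by
        have := (one_lt_div hwx).mpr hlt
        linarith
      have h2 : 0 < 1 + θ₁ * b x + θ₂ * w x := by positivity
      have h3 : 0 < μ * b x / (1 + θ₁ * b x + θ₂ * w x) := by positivity
      have h4 : ρ * b x * (1 - b x / w x) < 0 :=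
        mul_neg_of_pos_of_neg (mul_pos hρ hbxpos) h1
      linarith
    linarith
  -- Step 3: lower bound for w
  set m : ℝ := min w₀ (R / (a + δ * M)) with hmdef
  have haM : 0 < a + δ * M := by positivity
  have hmpos : 0 < m := lt_min hw₀ (div_pos hR haM)
  have hmR : (a + δ * M) * m ≤ R := by
    have h1 : m ≤ R / (a + δ * M) := min_le_right _ _
    calc (a + δ * M) * m ≤ (a + δ * M) * (R / (a + δ * M)) := by nlinarith
    _ = R := by field_simp
  have hwge : ∀ t ∈ Set.Icc (0:ℝ) T, m ≤ w t := by
    intro t ht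
    by_contra hcon
    push_neg at hcon
    set ε : ℝ := (m - w t) / 2 with hεdef
    have hε : 0 < ε := by simp [hεdef]; linarith
    have : -w t ≤ -(m - ε) := by
      refine barrier_le_const (f := fun s => -w s)
        (f' := fun s => -(R - a * w s - δ * w s * b s))
        (fun s hs => (hodew s hs).neg) ?_ ?_ t ht
      · simp [hw0]
        linarith [min_le_left w₀ (R / (a + δ * M))]
      · intro x hx hfx
        have hxIcc := Set.Ico_subset_Icc_self hx
        have hwx : 0 < w x := hwpos x hxIcc
        have hbx : 0 < b x := hbpos x hxIcc
        have hbM : b x ≤ M := hble x hxIcc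
        have hwxe : w x = m - ε := by
          have := neg_eq_iff_eq_neg.mp hfx
          linarith [this]
        simp only [neg_neg, neg_lt_zero] at *
        have hwx2 : 0 < m - ε := hwxe ▸ hwx
        rw [hwxe]
        nlinarith [mul_pos haM hε,
          mul_le_mul_of_nonneg_left hbM (mul_nonneg hδ.le hwx2.le)]
    linarith
  have hMeq : M = max b₀ (max w₀ (R / a)) := rfl
  have hmeq : m = min w₀ (R / (a + δ * max b₀ (max w₀ (R / a)))) := rfl
  refine ⟨fun t ht => hMeq ▸ hble t ht, fun t ht => hmeq ▸ hwge t ht, hmeq ▸ hmpos⟩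
end

section
/- At a positive equilibrium (w*, b*) (so w* = R/(a+δb*) and h(b*) = 0), the determinant of the Jacobian J(w*,b*) satisfies Det J = (ρδ²θ₁ b*(a + δb*) / (R[(1+θ₁b*)(a+δb*)+θ₂R])) · F'(b*); in particular sign(Det J) = sign(F'(b*)). -/
/-- At a positive equilibrium, Det J = (ρδ²θ₁ b*(a+δb*)/(R[(1+θ₁b*)(a+δb*)+θ₂R]))·F'(b*),
and in particular sign(Det J) = sign(F'(b*)). -/
theorem stmt_11 (R a δ ρ μ θ₁ θ₂ : ℝ)
    (hR : 0 < R) (ha : 0 < a) (hδ : 0 < δ) (hρ : 0 < ρ) (hμ : 0 < μ)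
    (hθ₁ : 0 < θ₁) (hθ₂ : 0 < θ₂)
    (w₁ b₁ : ℝ) (hw : 0 < w₁) (hb : 0 < b₁)
    (heqw : w₁ = R / (a + δ * b₁))
    (heqb : (ρ / R) * (R - a * b₁ - δ * b₁ ^ 2) -
      μ * (a + δ * b₁) / ((1 + θ₁ * b₁) * (a + δ * b₁) + θ₂ * R) = 0)
    (F' : ℝ → ℝ)
    (hF' : ∀ x, F' x = 4 * x ^ 3 + 3 * ((2 * a * θ₁ + δ) / (δ * θ₁)) * x ^ 2 +
      2 * ((R * δ * θ₂ - R * δ * θ₁ + 2 * a * δ + θ₁ * a ^ 2) / (δ ^ 2 * θ₁)) * x +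
      (ρ * (R * θ₂ * a - R * θ₁ * a + a ^ 2 - R * δ) + μ * R * δ) / (ρ * δ ^ 2 * θ₁))
    (detJ : ℝ)
    (hdet : detJ = (-a - δ * b₁) * (μ * θ₁ * b₁ / (1 + θ₁ * b₁ + θ₂ * w₁) ^ 2 - ρ * b₁ / w₁)
      - (-δ * w₁) * (ρ * b₁ ^ 2 / w₁ ^ 2 + μ * θ₂ * b₁ / (1 + θ₁ * b₁ + θ₂ * w₁) ^ 2)) :
    detJ = (ρ * δ ^ 2 * θ₁ * b₁ * (a + δ * b₁) /
      (R * ((1 + θ₁ * b₁) * (a + δ * b₁) + θ₂ * R))) * F' b₁ ∧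
    Real.sign detJ = Real.sign (F' b₁) := by
  have hs : 0 < a + δ * b₁ := by positivity
  have hD : 0 < (1 + θ₁ * b₁) * (a + δ * b₁) + θ₂ * R := by positivity
  have hden : 0 < 1 + θ₁ * b₁ + θ₂ * w₁ := by positivity
  have hμeq : μ = ρ * (R - a * b₁ - δ * b₁ ^ 2) *
      ((1 + θ₁ * b₁) * (a + δ * b₁) + θ₂ * R) / (R * (a + δ * b₁)) := by
    field_simp at heqb ⊢
    linarith [heqb]
  have key : detJ = (ρ * δ ^ 2 * θ₁ * b₁ * (a + δ * b₁) /
      (R * ((1 + θ₁ * b₁) * (a + δ * b₁) + θ₂ * R))) * F' b₁ := by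
    subst heqw
    rw [hdet, hF', hμeq]
    have h1 : (1 : ℝ) + θ₁ * b₁ + θ₂ * (R / (a + δ * b₁)) ≠ 0 := by positivity
    field_simp
    ring
  refine ⟨key, ?_⟩
  have hc : 0 < ρ * δ ^ 2 * θ₁ * b₁ * (a + δ * b₁) /
      (R * ((1 + θ₁ * b₁) * (a + δ * b₁) + θ₂ * R)) := by positivity
  rw [key]
  rcases lt_trichotomy (F' b₁) 0 with h | h | h
  · rw [Real.sign_of_neg h, Real.sign_of_neg (mul_neg_of_pos_of_neg hc h)]
  · simp [h]
  · rw [Real.sign_of_pos h, Real.sign_of_pos (mul_pos hc h)]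
end

section
/- At a positive equilibrium (w*, b*), the trace of the Jacobian satisfies Tr J = -P(R,b*)·T(R,b*) where P(R,b*) = (a+δb*)/(R[(1+θ₁b*)(a+δb*)+θ₂R]) > 0 and T(R,b*) = θ₂R² + K₁R + K₀ with K₁ = δθ₁b*² + (aθ₁+δ+ρθ₂-ρθ₁)b* + a and K₀ = ρb*(a+δb*)(1+2θ₁b*). -/
/-- At a positive equilibrium, Tr J = -P(R,b*)·T(R,b*) with P > 0, where
T(R,b*) = θ₂R² + K₁R + K₀. -/
theorem stmt_13 (R a δ ρ μ θ₁ θ₂ : ℝ)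
    (hR : 0 < R) (ha : 0 < a) (hδ : 0 < δ) (hρ : 0 < ρ) (hμ : 0 < μ)
    (hθ₁ : 0 < θ₁) (hθ₂ : 0 < θ₂)
    (w₁ b₁ : ℝ) (hw : 0 < w₁) (hb : 0 < b₁)
    (heqw : w₁ = R / (a + δ * b₁))
    (heqb : ρ * (1 - b₁ / w₁) = μ / (1 + θ₁ * b₁ + θ₂ * w₁))
    (trJ P T K₁ K₀ : ℝ)
    (htr : trJ = -a - δ * b₁ + μ * θ₁ * b₁ / (1 + θ₁ * b₁ + θ₂ * w₁) ^ 2 - ρ * b₁ / w₁)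
    (hP : P = (a + δ * b₁) / (R * ((1 + θ₁ * b₁) * (a + δ * b₁) + θ₂ * R)))
    (hK₁ : K₁ = δ * θ₁ * b₁ ^ 2 + (a * θ₁ + δ + ρ * θ₂ - ρ * θ₁) * b₁ + a)
    (hK₀ : K₀ = ρ * b₁ * (a + δ * b₁) * (1 + 2 * θ₁ * b₁))
    (hT : T = θ₂ * R ^ 2 + K₁ * R + K₀) :
    trJ = -P * T ∧ 0 < P := by
  have hD : 0 < a + δ * b₁ := by positivity
  have hS : 0 < 1 + θ₁ * b₁ + θ₂ * w₁ := by positivity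
  have hwD : w₁ * (a + δ * b₁) = R := by
    rw [heqw]; field_simp
  have hμeq : μ = ρ * (1 - b₁ / w₁) * (1 + θ₁ * b₁ + θ₂ * w₁) := by
    have := (div_eq_iff (ne_of_gt hS)).mp heqb.symm
    linarith [this]
  have hden : 0 < (1 + θ₁ * b₁) * (a + δ * b₁) + θ₂ * R := by positivity
  constructor
  · rw [htr, hμeq, hP, hT, hK₁, hK₀]
    rw [← hwD]
    field_simp
    ring
  · rw [hP]; positivity
end

section
/- Let d₁(z) = l²(B₁z + B₂)/(z(d₂z - B₃)) with B₁ = d₂a₁₁ < 0, B₂ = (a₁₂a₂₁ - a₁₁a₂₂)l² < 0, B₃ = a₂₂l² > 0, defined for 0 < z < B₃/d₂. Then d₁(z) > 0 on this interval, d₁(z) → +∞ as z → 0⁺ and as z → (B₃/d₂)⁻, and d₁ attains its minimum at z* = (-d₂B₂ - √(d₂²B₂² + d₂B₁B₂B₃))/(d₂B₁), which lies in (0, B₃/d₂). -/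
set_option maxHeartbeats 1000000


/-- On (0, B₃/d₂), the critical diffusion curve d₁(z) = l²(B₁z+B₂)/(z(d₂z-B₃)) is
positive, blows up at both endpoints, and attains its minimum at
z* = (-d₂B₂ - √(d₂²B₂² + d₂B₁B₂B₃))/(d₂B₁) ∈ (0, B₃/d₂). -/
theorem stmt_17 (d₂ l a₁₁ a₁₂ a₂₁ a₂₂ : ℝ)
    (hd₂ : 0 < d₂) (hl : 0 < l) (ha₁₁ : a₁₁ < 0) (ha₂₂ : 0 < a₂₂)
    (hdet : 0 < a₁₁ * a₂₂ - a₁₂ * a₂₁)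
    (B₁ B₂ B₃ : ℝ)
    (hB₁ : B₁ = d₂ * a₁₁) (hB₂ : B₂ = (a₁₂ * a₂₁ - a₁₁ * a₂₂) * l ^ 2)
    (hB₃ : B₃ = a₂₂ * l ^ 2)
    (d₁f : ℝ → ℝ)
    (hd₁f : ∀ z, d₁f z = l ^ 2 * (B₁ * z + B₂) / (z * (d₂ * z - B₃)))
    (zstar : ℝ)
    (hz : zstar = (-(d₂ * B₂) - Real.sqrt (d₂ ^ 2 * B₂ ^ 2 + d₂ * B₁ * B₂ * B₃)) / (d₂ * B₁)) :
    (∀ z ∈ Set.Ioo (0 : ℝ) (B₃ / d₂), 0 < d₁f z) ∧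
    Filter.Tendsto d₁f (nhdsWithin 0 (Set.Ioi 0)) Filter.atTop ∧
    Filter.Tendsto d₁f (nhdsWithin (B₃ / d₂) (Set.Iio (B₃ / d₂))) Filter.atTop ∧
    zstar ∈ Set.Ioo (0 : ℝ) (B₃ / d₂) ∧
    (∀ z ∈ Set.Ioo (0 : ℝ) (B₃ / d₂), d₁f zstar ≤ d₁f z) := by
  have hl2 : (0:ℝ) < l ^ 2 := by positivity
  have hB₁n : B₁ < 0 := by rw [hB₁]; exact mul_neg_of_pos_of_neg hd₂ ha₁₁
  have hB₂n : B₂ < 0 := by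
    rw [hB₂]; nlinarith
  have hB₃p : 0 < B₃ := by rw [hB₃]; positivity
  have hcp : 0 < B₃ / d₂ := div_pos hB₃p hd₂
  have h12 : 0 < B₁ * B₂ := mul_pos_of_neg_of_neg hB₁n hB₂n
  have hT : 0 < d₂ * B₁ * B₂ * B₃ := by nlinarith [mul_pos (mul_pos hd₂ h12) hB₃p]
  have hd₂B₂ : 0 < -(d₂ * B₂) := by nlinarith [mul_neg_of_pos_of_neg hd₂ hB₂n]
  have hDpos : 0 < d₂ ^ 2 * B₂ ^ 2 + d₂ * B₁ * B₂ * B₃ := by nlinarith [sq_nonneg (d₂ * B₂)]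
  set s := Real.sqrt (d₂ ^ 2 * B₂ ^ 2 + d₂ * B₁ * B₂ * B₃) with hs_def
  have hs2 : s ^ 2 = d₂ ^ 2 * B₂ ^ 2 + d₂ * B₁ * B₂ * B₃ := Real.sq_sqrt hDpos.le
  have hs0 : 0 ≤ s := Real.sqrt_nonneg _
  have hsgt : -(d₂ * B₂) < s := by nlinarith [hs2, hs0, hT, hd₂B₂]
  have hd₂B₁ : d₂ * B₁ < 0 := mul_neg_of_pos_of_neg hd₂ hB₁n
  have hd₂B₁ne : d₂ * B₁ ≠ 0 := ne_of_lt hd₂B₁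
  -- zstar ∈ (0, B₃/d₂)
  have hz0 : 0 < zstar := by
    rw [hz]
    apply div_pos_of_neg_of_neg _ hd₂B₁
    linarith
  have hB₁B₃ : B₁ * B₃ < 0 := mul_neg_of_neg_of_pos hB₁n hB₃p
  have hzlt : zstar < B₃ / d₂ := by
    rw [hz, div_lt_iff_of_neg hd₂B₁]
    have h1 : B₃ / d₂ * (d₂ * B₁) = B₃ * B₁ := by field_simp
    rw [h1]
    have h2 : 0 < -(d₂ * B₂) - B₁ * B₃ := by linarith
    have hslt : s < -(d₂ * B₂) - B₁ * B₃ := by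
      nlinarith [hs2, hs0, hT, h2, sq_nonneg (B₁ * B₃)]
    linarith
  -- quadratic relation for zstar
  have h1 : zstar * (d₂ * B₁) = -(d₂ * B₂) - s := by
    rw [hz, div_mul_cancel₀ _ hd₂B₁ne]
  have hquad : d₂ * B₁ * zstar ^ 2 + 2 * d₂ * B₂ * zstar - B₂ * B₃ = 0 := by
    apply mul_left_cancel₀ hd₂B₁ne
    rw [mul_zero]
    linear_combination (zstar * (d₂ * B₁) + (-(d₂ * B₂) - s) + 2 * d₂ * B₂) * h1 + hs2
  -- positivity on the interval
  have hpos : ∀ z ∈ Set.Ioo (0 : ℝ) (B₃ / d₂), 0 < d₁f z := by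
    intro z hzm
    obtain ⟨hz1, hz2⟩ := hzm
    rw [hd₁f]
    have hden : z * (d₂ * z - B₃) < 0 := by
      apply mul_neg_of_pos_of_neg hz1
      rw [lt_div_iff₀ hd₂] at hz2; linarith
    have hnum : B₁ * z + B₂ < 0 := by nlinarith [mul_neg_of_neg_of_pos hB₁n hz1]
    exact div_pos_of_neg_of_neg (mul_neg_of_pos_of_neg hl2 hnum) hden
  have hfun : d₁f = fun z => (-(l ^ 2 * (B₁ * z + B₂))) * (-(z * (d₂ * z - B₃)))⁻¹ := by
    funext z; rw [hd₁f, ← neg_div_neg_eq, div_eq_mul_inv]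
  refine ⟨hpos, ?_, ?_, ⟨hz0, hzlt⟩, ?_⟩
  · -- limit at 0⁺
    rw [hfun]
    have hC : (0:ℝ) < -(l ^ 2 * B₂) := by nlinarith [mul_neg_of_pos_of_neg hl2 hB₂n]
    apply Filter.Tendsto.pos_mul_atTop hC
    · apply tendsto_nhdsWithin_of_tendsto_nhds
      have hc : Continuous fun z : ℝ => -(l ^ 2 * (B₁ * z + B₂)) := by fun_prop
      have := hc.tendsto 0
      simpa using this
    · apply Filter.Tendsto.inv_tendsto_nhdsGT_zero
      apply tendsto_nhdsWithin_of_tendsto_nhds_of_eventually_within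
      · apply tendsto_nhdsWithin_of_tendsto_nhds
        have hc : Continuous fun z : ℝ => -(z * (d₂ * z - B₃)) := by fun_prop
        have := hc.tendsto 0
        simpa using this
      · have h1 : ∀ᶠ z in nhdsWithin (0:ℝ) (Set.Ioi 0), z ∈ Set.Ioi (0:ℝ) :=
          self_mem_nhdsWithin
        have h2 : ∀ᶠ z in nhdsWithin (0:ℝ) (Set.Ioi 0), z < B₃ / d₂ :=
          mem_nhdsWithin_of_mem_nhds (Iio_mem_nhds hcp)
        filter_upwards [h1, h2] with z hza hzb
        have hza' : (0:ℝ) < z := hza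
        have hzb' : d₂ * z - B₃ < 0 := by rw [lt_div_iff₀ hd₂] at hzb; linarith
        simp only [Set.mem_Ioi]
        nlinarith [mul_neg_of_pos_of_neg hza' hzb']
  · -- limit at (B₃/d₂)⁻
    rw [hfun]
    have hnum : B₁ * (B₃ / d₂) + B₂ < 0 := by
      have : B₁ * (B₃ / d₂) < 0 := mul_neg_of_neg_of_pos hB₁n hcp
      linarith
    have hC : (0:ℝ) < -(l ^ 2 * (B₁ * (B₃ / d₂) + B₂)) := by
      nlinarith [mul_neg_of_pos_of_neg hl2 hnum]
    apply Filter.Tendsto.pos_mul_atTop hC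
    · apply tendsto_nhdsWithin_of_tendsto_nhds
      have hc : Continuous fun z : ℝ => -(l ^ 2 * (B₁ * z + B₂)) := by fun_prop
      exact hc.tendsto _
    · apply Filter.Tendsto.inv_tendsto_nhdsGT_zero
      apply tendsto_nhdsWithin_of_tendsto_nhds_of_eventually_within
      · apply tendsto_nhdsWithin_of_tendsto_nhds
        have hc : Continuous fun z : ℝ => -(z * (d₂ * z - B₃)) := by fun_prop
        have h := hc.tendsto (B₃ / d₂)
        have hval : -((B₃ / d₂) * (d₂ * (B₃ / d₂) - B₃)) = 0 := by
          field_simp; ring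
        rw [hval] at h
        exact h
      · have h1 : ∀ᶠ z in nhdsWithin (B₃/d₂) (Set.Iio (B₃/d₂)), z ∈ Set.Iio (B₃/d₂) :=
          self_mem_nhdsWithin
        have h2 : ∀ᶠ z in nhdsWithin (B₃/d₂) (Set.Iio (B₃/d₂)), 0 < z :=
          mem_nhdsWithin_of_mem_nhds (Ioi_mem_nhds hcp)
        filter_upwards [h1, h2] with z hza hzb
        have hza' : z < B₃ / d₂ := hza
        have hzb' : d₂ * z - B₃ < 0 := by rw [lt_div_iff₀ hd₂] at hza'; linarith
        simp only [Set.mem_Ioi]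
        nlinarith [mul_neg_of_pos_of_neg hzb hzb']
  · -- minimality
    intro z hzm
    obtain ⟨hz1, hz2⟩ := hzm
    have hDz : z * (d₂ * z - B₃) < 0 := by
      apply mul_neg_of_pos_of_neg hz1
      rw [lt_div_iff₀ hd₂] at hz2; linarith
    have hDzs : zstar * (d₂ * zstar - B₃) < 0 := by
      apply mul_neg_of_pos_of_neg hz0
      rw [lt_div_iff₀ hd₂] at hzlt; linarith
    have hNs : B₁ * zstar + B₂ < 0 := by
      nlinarith [mul_neg_of_neg_of_pos hB₁n hz0]
    have hkey2 : (l ^ 2 * (B₁ * z + B₂)) * (zstar * (d₂ * zstar - B₃))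
        - (l ^ 2 * (B₁ * zstar + B₂)) * (z * (d₂ * z - B₃))
        = l ^ 2 * (d₂ * (z - zstar) ^ 2 * (-(B₁ * zstar + B₂))) := by
      linear_combination (l ^ 2 * (zstar - z)) * hquad
    have hnn : 0 ≤ d₂ * (z - zstar) ^ 2 * (-(B₁ * zstar + B₂)) := by
      apply mul_nonneg (by positivity); linarith
    rw [hd₁f, hd₁f, ← neg_div_neg_eq (l ^ 2 * (B₁ * zstar + B₂)),
      ← neg_div_neg_eq (l ^ 2 * (B₁ * z + B₂)),
      div_le_div_iff₀ (by linarith) (by linarith)]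
    nlinarith [hkey2, mul_nonneg hl2.le hnn]
end

section
/- With the same notation and z > B₃/d₂, the function d₁(z) = l²(B₁z + B₂)/(z(d₂z - B₃)) is negative, strictly increasing, and tends to 0 as z → +∞; consequently for any d₁ > 0 and z > B₃/d₂, J = d₁d₂z²/l⁴ - (d₁a₂₂ + d₂a₁₁)z/l² + (a₁₁a₂₂ - a₁₂a₂₁) > 0. -/
/-- For z > B₃/d₂, d₁(z) = l²(B₁z+B₂)/(z(d₂z-B₃)) is negative, strictly increasing,
and tends to 0 at infinity; hence J > 0 there for any d₁ > 0. -/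
theorem stmt_18 (d₂ l a₁₁ a₁₂ a₂₁ a₂₂ : ℝ)
    (hd₂ : 0 < d₂) (hl : 0 < l) (ha₁₁ : a₁₁ < 0) (ha₂₂ : 0 < a₂₂)
    (hdet : 0 < a₁₁ * a₂₂ - a₁₂ * a₂₁)
    (B₁ B₂ B₃ : ℝ)
    (hB₁ : B₁ = d₂ * a₁₁) (hB₂ : B₂ = (a₁₂ * a₂₁ - a₁₁ * a₂₂) * l ^ 2)
    (hB₃ : B₃ = a₂₂ * l ^ 2)
    (d₁f : ℝ → ℝ)
    (hd₁f : ∀ z, d₁f z = l ^ 2 * (B₁ * z + B₂) / (z * (d₂ * z - B₃))) :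
    (∀ z, B₃ / d₂ < z → d₁f z < 0) ∧
    StrictMonoOn d₁f (Set.Ioi (B₃ / d₂)) ∧
    Filter.Tendsto d₁f Filter.atTop (nhds 0) ∧
    (∀ d₁ : ℝ, 0 < d₁ → ∀ z, B₃ / d₂ < z →
      0 < d₁ * d₂ * z ^ 2 / l ^ 4 - (d₁ * a₂₂ + d₂ * a₁₁) * z / l ^ 2 +
        (a₁₁ * a₂₂ - a₁₂ * a₂₁)) := by
  have hl2 : (0:ℝ) < l ^ 2 := by positivity
  have hB₁' : B₁ < 0 := by rw [hB₁]; exact mul_neg_of_pos_of_neg hd₂ ha₁₁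
  have hB₂' : B₂ < 0 := by rw [hB₂]; nlinarith
  have hB₃' : 0 < B₃ := by rw [hB₃]; positivity
  have hc : 0 < B₃ / d₂ := div_pos hB₃' hd₂
  have key : ∀ z, B₃ / d₂ < z → 0 < z ∧ 0 < d₂ * z - B₃ := by
    intro z hz
    have hz0 : 0 < z := lt_trans hc hz
    refine ⟨hz0, ?_⟩
    have := (div_lt_iff₀ hd₂).mp hz
    linarith
  have hnum : ∀ z, 0 < z → l ^ 2 * (B₁ * z + B₂) < 0 := by
    intro z hz0
    have h1 : B₁ * z < 0 := mul_neg_of_neg_of_pos hB₁' hz0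
    exact mul_neg_of_pos_of_neg hl2 (by linarith)
  refine ⟨?_, ?_, ?_, ?_⟩
  · intro z hz
    obtain ⟨hz0, hzd⟩ := key z hz
    rw [hd₁f]
    exact div_neg_of_neg_of_pos (hnum z hz0) (mul_pos hz0 hzd)
  · intro x hx y hy hxy
    obtain ⟨hx0, hxd⟩ := key x hx
    obtain ⟨hy0, hyd⟩ := key y hy
    rw [hd₁f, hd₁f, div_lt_div_iff₀ (mul_pos hx0 hxd) (mul_pos hy0 hyd)]
    have h2 : B₁ * (d₂ * x * y) + B₂ * (d₂ * x + d₂ * y - B₃) < 0 := by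
      have t1 : B₁ * (d₂ * x * y) < 0 :=
        mul_neg_of_neg_of_pos hB₁' (mul_pos (mul_pos hd₂ hx0) hy0)
      have t2 : B₂ * (d₂ * x + d₂ * y - B₃) < 0 :=
        mul_neg_of_neg_of_pos hB₂' (by nlinarith)
      linarith
    nlinarith [mul_pos (mul_pos hl2 (sub_pos.mpr hxy)) (neg_pos.mpr h2)]
  · have heq : ∀ᶠ z in Filter.atTop,
        (l ^ 2 * B₁ * z⁻¹ + l ^ 2 * B₂ * (z⁻¹) ^ 2) / (d₂ - B₃ * z⁻¹) = d₁f z := by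
      filter_upwards [Filter.eventually_gt_atTop (max (B₃ / d₂) 0)] with z hz
      have hz' : B₃ / d₂ < z := lt_of_le_of_lt (le_max_left _ _) hz
      obtain ⟨hz0, hzd⟩ := key z hz'
      rw [hd₁f]
      have hpos : 0 < d₂ - B₃ * z⁻¹ := by
        have h1 : B₃ * z⁻¹ < d₂ := by
          rw [← div_eq_mul_inv, div_lt_iff₀ hz0]
          nlinarith
        linarith
      rw [div_eq_div_iff (ne_of_gt hpos) (ne_of_gt (mul_pos hz0 hzd))]
      field_simp
    have hnumt : Filter.Tendsto (fun z : ℝ => l ^ 2 * B₁ * z⁻¹ + l ^ 2 * B₂ * (z⁻¹) ^ 2)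
        Filter.atTop (nhds (l ^ 2 * B₁ * 0 + l ^ 2 * B₂ * 0 ^ 2)) :=
      (tendsto_const_nhds.mul tendsto_inv_atTop_zero).add
        (tendsto_const_nhds.mul (tendsto_inv_atTop_zero.pow 2))
    have hdent : Filter.Tendsto (fun z : ℝ => d₂ - B₃ * z⁻¹)
        Filter.atTop (nhds (d₂ - B₃ * 0)) :=
      tendsto_const_nhds.sub (tendsto_const_nhds.mul tendsto_inv_atTop_zero)
    have hlim := hnumt.div hdent (by simpa using hd₂.ne')
    norm_num at hlim
    simp only [← inv_pow] at hlim
    exact hlim.congr' heq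
  · intro d₁ hd₁ z hz
    obtain ⟨hz0, hzd⟩ := key z hz
    have hN : 0 < d₁ * (z * (d₂ * z - B₃)) - l ^ 2 * (B₁ * z + B₂) := by
      have := mul_pos hd₁ (mul_pos hz0 hzd)
      have := hnum z hz0
      linarith
    have heq : d₁ * d₂ * z ^ 2 / l ^ 4 - (d₁ * a₂₂ + d₂ * a₁₁) * z / l ^ 2 +
        (a₁₁ * a₂₂ - a₁₂ * a₂₁)
        = (d₁ * (z * (d₂ * z - B₃)) - l ^ 2 * (B₁ * z + B₂)) / l ^ 4 := by
      subst hB₁ hB₂ hB₃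
      field_simp
      ring
    rw [heq]
    exact div_pos hN (by positivity)
end

section
/- At the bare-soil state (R/a, 0) of the reaction–diffusion system, if θ₂ < a(μ-ρ)/(ρR) (with μ > ρ), then for every mode k ≥ 0, T_k = -(d₁+d₂)k²/l² - a + ρ - μa/(a+θ₂R) < 0 and J_k = d₁d₂k⁴/l⁴ - [d₁(ρ - μa/(a+θ₂R)) - d₂a]k²/l² - a(ρ - μa/(a+θ₂R)) > 0; hence the bare-soil state is linearly stable to all spatial perturbations. -/
/-- At the bare-soil state, if θ₂ < a(μ-ρ)/(ρR) then every mode k has T_k < 0 and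
J_k > 0: the bare-soil state is linearly stable to all spatial perturbations. -/
theorem stmt_19 (R a δ ρ μ θ₁ θ₂ d₁ d₂ l : ℝ)
    (hR : 0 < R) (ha : 0 < a) (hδ : 0 < δ) (hρ : 0 < ρ) (hμ : 0 < μ)
    (hθ₁ : 0 < θ₁) (hθ₂ : 0 < θ₂) (hd₁ : 0 < d₁) (hd₂ : 0 < d₂) (hl : 0 < l)
    (hμρ : ρ < μ) (hcond : θ₂ < a * (μ - ρ) / (ρ * R)) :
    ∀ k : ℕ,
      -(d₁ + d₂) * (k : ℝ) ^ 2 / l ^ 2 - a + ρ - μ * a / (a + θ₂ * R) < 0 ∧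
      0 < d₁ * d₂ * (k : ℝ) ^ 4 / l ^ 4 -
        (d₁ * (ρ - μ * a / (a + θ₂ * R)) - d₂ * a) * (k : ℝ) ^ 2 / l ^ 2 -
        a * (ρ - μ * a / (a + θ₂ * R)) := by
  intro k
  have hden : 0 < a + θ₂ * R := by positivity
  have hcond' : θ₂ * (ρ * R) < a * (μ - ρ) :=
    (lt_div_iff₀ (by positivity : (0:ℝ) < ρ * R)).mp hcond
  have hc : ρ - μ * a / (a + θ₂ * R) < 0 := by
    rw [sub_neg, lt_div_iff₀ hden]
    nlinarith
  have hx : (0:ℝ) ≤ (k : ℝ) ^ 2 / l ^ 2 := by positivity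
  have hx4 : (0:ℝ) ≤ d₁ * d₂ * (k : ℝ) ^ 4 / l ^ 4 := by positivity
  constructor
  · have : -(d₁ + d₂) * (k : ℝ) ^ 2 / l ^ 2 ≤ 0 := by
      rw [neg_mul, neg_div]; simpa using by positivity
    linarith
  · have h1 : 0 ≤ -(d₁ * (ρ - μ * a / (a + θ₂ * R))) * ((k : ℝ) ^ 2 / l ^ 2) := by
      apply mul_nonneg _ hx; nlinarith
    have h2 : 0 ≤ d₂ * a * ((k : ℝ) ^ 2 / l ^ 2) := by positivity
    have h3 : 0 < -(a * (ρ - μ * a / (a + θ₂ * R))) := by nlinarith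
    have heq : (d₁ * (ρ - μ * a / (a + θ₂ * R)) - d₂ * a) * (k : ℝ) ^ 2 / l ^ 2 =
        -( -(d₁ * (ρ - μ * a / (a + θ₂ * R))) * ((k : ℝ) ^ 2 / l ^ 2)
          + d₂ * a * ((k : ℝ) ^ 2 / l ^ 2)) := by ring
    rw [heq]
    linarith
end
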